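/- Let $A$ be a commutative ring and $f = u^n + a_1 u^{n-1} + \cdots + a_n$ a monic polynomial over $A$. Define the splitting ring $B = \mathrm{Split}_A(f) = A[\xi_1,\ldots,\xi_n]/I$, where $I$ is generated by the elements $a_i - (-1)^i e_i(\xi_1,\ldots,\xi_n)$ for $1 \le i \le n$ (with $e_i$ the $i$-th elementary symmetric polynomial). Then $B$ is a free $A$-module of rank $n!$. -/

import Mathlib

/-- The ideal of relations defining the splitting ring of a monic polynomial
`f = u^n + a_1 u^(n-1) + ... + a_n`: it is generated by the elements
`a_i - (-1)^i e_i(ξ_1, ..., ξ_n)` for `1 ≤ i ≤ n`, where `a_i = f.coeff (n - i)`. -/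
noncomputable def splittingIdeal (A : Type) [CommRing A] (n : ℕ) (f : Polynomial A) :
    Ideal (MvPolynomial (Fin n) A) :=
  Ideal.span (Set.range fun i : Fin n =>
    MvPolynomial.C (f.coeff (n - ((i : ℕ) + 1))) -
      (-1 : MvPolynomial (Fin n) A) ^ ((i : ℕ) + 1) *
        MvPolynomial.esymm (Fin n) A ((i : ℕ) + 1))

/-- The splitting ring `Split_A(f) = A[ξ_1, ..., ξ_n]/I`. -/
noncomputable abbrev SplitRing (A : Type) [CommRing A] (n : ℕ) (f : Polynomial A) : Type :=
  MvPolynomial (Fin n) A ⧸ splittingIdeal A n f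

open Polynomial Finset

section Key

lemma psi_esymm {A S : Type} [CommRing A] [CommRing S] {n : ℕ}
    (ψ : MvPolynomial (Fin n) A →+* S) (k : ℕ) :
    ψ (MvPolynomial.esymm (Fin n) A k) =
      (Multiset.map (fun j => ψ (MvPolynomial.X j)) Finset.univ.val).esymm k := by
  rw [MvPolynomial.esymm, map_sum, Finset.esymm_map_val]
  exact Finset.sum_congr rfl fun t _ => by rw [map_prod]

lemma prod_coeff {S : Type} [CommRing S] {n : ℕ} (r : Fin n → S) {k : ℕ} (hk : k ≤ n) :
    (∏ j : Fin n, (X - C (r j))).coeff k =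
      (-1) ^ (n - k) * (Multiset.map r Finset.univ.val).esymm (n - k) := by
  have hcard : Multiset.card (Multiset.map r Finset.univ.val) = n := by simp
  have : (∏ j : Fin n, (X - C (r j))) =
      ((Multiset.map r Finset.univ.val).map fun t => X - C t).prod := by
    rw [Multiset.map_map]; rfl
  rw [this, Multiset.prod_X_sub_C_coeff _ (by rwa [hcard]), hcard]

lemma key {A S : Type} [CommRing A] [CommRing S] {n : ℕ} {f : Polynomial A}
    (hf : f.Monic) (hd : f.natDegree = n) (ψ : MvPolynomial (Fin n) A →+* S) :
    f.map (ψ.comp MvPolynomial.C) = ∏ j : Fin n, (X - C (ψ (MvPolynomial.X j))) ↔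
    ∀ i : Fin n, ψ (MvPolynomial.C (f.coeff (n - ((i : ℕ) + 1))) -
      (-1 : MvPolynomial (Fin n) A) ^ ((i : ℕ) + 1) *
        MvPolynomial.esymm (Fin n) A ((i : ℕ) + 1)) = 0 := by
  rcases subsingleton_or_nontrivial S with hS | hS
  · constructor <;> intro _
    · intro i; exact Subsingleton.elim _ _
    · exact Subsingleton.elim _ _
  set r : Fin n → S := fun j => ψ (MvPolynomial.X j) with hr
  set P : Polynomial S := ∏ j : Fin n, (X - C (r j)) with hP
  have hPm : P.Monic := monic_prod_of_monic _ _ fun j _ => monic_X_sub_C _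
  have hPd : P.natDegree = n := by
    rw [hP, natDegree_prod_of_monic _ _ fun j _ => monic_X_sub_C _]
    simp [natDegree_X_sub_C]
  have hgen : ∀ i : Fin n,
      (ψ (MvPolynomial.C (f.coeff (n - ((i : ℕ) + 1))) -
        (-1 : MvPolynomial (Fin n) A) ^ ((i : ℕ) + 1) *
          MvPolynomial.esymm (Fin n) A ((i : ℕ) + 1)) = 0 ↔
        ψ.comp MvPolynomial.C (f.coeff (n - ((i : ℕ) + 1))) =
          (-1 : S) ^ ((i : ℕ) + 1) *
            (Multiset.map r Finset.univ.val).esymm ((i : ℕ) + 1)) := by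
    intro i
    rw [map_sub, sub_eq_zero, map_mul, map_pow, map_neg, map_one, psi_esymm]
    rfl
  constructor
  · intro h i
    rw [hgen]
    have h1 : ((i : ℕ) + 1) ≤ n := i.2
    have : ψ.comp MvPolynomial.C (f.coeff (n - ((i : ℕ) + 1))) =
        (f.map (ψ.comp MvPolynomial.C)).coeff (n - ((i : ℕ) + 1)) := (coeff_map _ _).symm
    rw [this, h, prod_coeff r (Nat.sub_le _ _), Nat.sub_sub_self h1]
  · intro h
    ext k
    rcases lt_trichotomy k n with hk | hk | hk
    · obtain ⟨i, hi1, hi2⟩ : ∃ i : Fin n, ((i : ℕ) + 1 = n - k ∧ n - ((i : ℕ) + 1) = k) :=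
        ⟨⟨n - k - 1, by omega⟩, by simp only [Fin.val_mk]; omega, by simp only [Fin.val_mk]; omega⟩
      have := (hgen i).1 (h i)
      rw [hi2, hi1] at this
      rw [coeff_map, this, prod_coeff r hk.le]
    · subst hk
      have e1 : f.coeff k = 1 := by rw [← hd]; exact hf.coeff_natDegree
      have e2 : P.coeff k = 1 := by rw [← hPd]; exact hPm.coeff_natDegree
      rw [coeff_map, e1, map_one, e2]
    · rw [coeff_map, coeff_eq_zero_of_natDegree_lt (by omega : f.natDegree < k), map_zero,
        coeff_eq_zero_of_natDegree_lt (by omega : P.natDegree < k)]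

/-- In the splitting ring, `f` splits into linear factors. -/
lemma splitRing_prod {A : Type} [CommRing A] {n : ℕ} {f : Polynomial A}
    (hf : f.Monic) (hd : f.natDegree = n) :
    f.map ((Ideal.Quotient.mk (splittingIdeal A n f)).comp MvPolynomial.C) =
      ∏ j : Fin n, (X - C (Ideal.Quotient.mk (splittingIdeal A n f) (MvPolynomial.X j))) :=
  (key hf hd _).2 fun i =>
    Ideal.Quotient.eq_zero_iff_mem.2 (Ideal.subset_span ⟨i, rfl⟩)

end Key

/-- trivial linear equiv between subsingleton modules -/
def linEquivOfSubsingleton {R M N : Type*} [Semiring R] [AddCommMonoid M] [AddCommMonoid N]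
    [Module R M] [Module R N] [Subsingleton M] [Subsingleton N] : M ≃ₗ[R] N where
  toFun := fun _ => 0
  invFun := fun _ => 0
  map_add' := fun _ _ => (Subsingleton.elim _ _)
  map_smul' := fun _ _ => (Subsingleton.elim _ _)
  left_inv := fun _ => Subsingleton.elim _ _
  right_inv := fun _ => Subsingleton.elim _ _

set_option maxHeartbeats 1000000 in
set_option synthInstance.maxHeartbeats 400000 in
theorem aux : ∀ (n : ℕ) (A : Type) [CommRing A] (f : Polynomial A), f.Monic → f.natDegree = n →
    Nonempty (Module.Basis (Fin n.factorial) A (SplitRing A n f)) := by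
  intro n
  induction n with
  | zero =>
    intro A _ f hf hd
    have hI : splittingIdeal A 0 f = ⊥ := by
      rw [splittingIdeal, Set.range_eq_empty, Ideal.span_empty]
    have hsurj : Function.Surjective (algebraMap A (SplitRing A 0 f)) :=
      Ideal.Quotient.mk_surjective.comp (MvPolynomial.C_surjective (Fin 0))
    have hinj : Function.Injective (algebraMap A (SplitRing A 0 f)) := by
      intro a b hab
      have : Ideal.Quotient.mk (splittingIdeal A 0 f) (MvPolynomial.C a) =
          Ideal.Quotient.mk (splittingIdeal A 0 f) (MvPolynomial.C b) := hab
      rw [Ideal.Quotient.eq, hI, Ideal.mem_bot, sub_eq_zero] at this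
      exact MvPolynomial.C_injective _ _ this
    exact ⟨(Module.Basis.singleton (Fin 1) A).map
      (LinearEquiv.ofBijective (Algebra.linearMap A (SplitRing A 0 f)) ⟨hinj, hsurj⟩)⟩
  | succ n IH =>
    intro A _ f hf hd
    rcases subsingleton_or_nontrivial A with hA | hA
    · haveI := Module.subsingleton A (SplitRing A (n+1) f)
      haveI := Module.subsingleton A (Fin (n+1).factorial →₀ A)
      exact ⟨Module.Basis.ofRepr linEquivOfSubsingleton⟩
    set I := splittingIdeal A (n+1) f with hI
    set mkI := Ideal.Quotient.mk I with hmkI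
    set A' := AdjoinRoot f with hA'
    set x : A' := AdjoinRoot.root f with hx
    haveI : Nontrivial A' := by
      refine nontrivial_of_ne ((AdjoinRoot.powerBasis' hf).basis ⟨0, by rw [AdjoinRoot.powerBasis'_dim, hd]; omega⟩) 0 ?_
      exact Module.Basis.ne_zero _ _
    set fA' : Polynomial A' := f.map (algebraMap A A') with hfA'
    have hfA'm : fA'.Monic := hf.map _
    have hroot : fA'.IsRoot x := by
      rw [IsRoot, hfA', eval_map, AdjoinRoot.algebraMap_eq]
      exact AdjoinRoot.eval₂_root f
    set g : Polynomial A' := fA' /ₘ (X - C x) with hg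
    have hfg : (X - C x) * g = fA' := (mul_divByMonic_eq_iff_isRoot).2 hroot
    have hgm : g.Monic := Monic.of_mul_monic_left (monic_X_sub_C x) (hfg ▸ hfA'm)
    have hgd : g.natDegree = n := by
      have h1 : fA'.natDegree = n + 1 := by rw [hfA', hf.natDegree_map, hd]
      have h2 : ((X - C x) * g).natDegree = 1 + g.natDegree := by
        rw [(monic_X_sub_C x).natDegree_mul hgm, natDegree_X_sub_C]
      rw [hfg, h1] at h2
      omega
    set I' := splittingIdeal A' n g with hI'
    set mkI' := Ideal.Quotient.mk I' with hmkI'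
    set B' := SplitRing A' n g with hB'def
    -- the two splitting identities
    have hBsplit : f.map (mkI.comp MvPolynomial.C) =
        ∏ j : Fin (n+1), (X - C (mkI (MvPolynomial.X j))) := splitRing_prod hf hd
    have hB'split : g.map (mkI'.comp MvPolynomial.C) =
        ∏ j : Fin n, (X - C (mkI' (MvPolynomial.X j))) := splitRing_prod hgm hgd
    -- forward homomorphism
    set r : Fin (n+1) → B' :=
      Fin.snoc (fun i : Fin n => mkI' (MvPolynomial.X i)) (algebraMap A' B' x) with hrdef
    set Φ0 : MvPolynomial (Fin (n+1)) A →+* B' := MvPolynomial.eval₂Hom (algebraMap A B') r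
      with hΦ0
    have halgB' : algebraMap A' B' = mkI'.comp MvPolynomial.C := rfl
    have halgAB' : algebraMap A B' = (mkI'.comp MvPolynomial.C).comp (algebraMap A A') := rfl
    have hsplitΦ : f.map (Φ0.comp MvPolynomial.C) =
        ∏ j : Fin (n+1), (X - C (Φ0 (MvPolynomial.X j))) := by
      rw [hΦ0, MvPolynomial.eval₂Hom_comp_C]
      simp only [MvPolynomial.eval₂Hom_X']
      rw [Fin.prod_univ_castSucc]
      simp only [hrdef, Fin.snoc_castSucc, Fin.snoc_last]
      rw [← hB'split, halgB', halgAB', ← Polynomial.map_map, ← hfA', ← hfg]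
      rw [Polynomial.map_mul, Polynomial.map_sub, Polynomial.map_X, Polynomial.map_C]
      ring
    have hkerΦ : I ≤ RingHom.ker Φ0 := by
      rw [hI, splittingIdeal, Ideal.span_le]
      rintro _ ⟨i, rfl⟩
      exact (key hf hd Φ0).1 hsplitΦ i
    set Φ : SplitRing A (n+1) f →+* B' := Ideal.Quotient.lift I Φ0 (fun a ha => RingHom.mem_ker.1 (hkerΦ ha))
      with hΦ
    -- backward homomorphism
    have hrootB : Polynomial.eval₂ (algebraMap A (SplitRing A (n+1) f))
        (mkI (MvPolynomial.X (Fin.last n))) f = 0 := by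
      have halg : algebraMap A (SplitRing A (n+1) f) = mkI.comp MvPolynomial.C := rfl
      rw [halg, ← eval_map, hBsplit, eval_prod]
      refine Finset.prod_eq_zero (Finset.mem_univ (Fin.last n)) ?_
      simp
    set Ψ1 : A' →+* SplitRing A (n+1) f :=
      AdjoinRoot.lift (algebraMap A (SplitRing A (n+1) f)) (mkI (MvPolynomial.X (Fin.last n)))
        hrootB with hΨ1
    have hΨ1x : Ψ1 x = mkI (MvPolynomial.X (Fin.last n)) := AdjoinRoot.lift_root _
    have hΨ1a : Ψ1.comp (algebraMap A A') = algebraMap A (SplitRing A (n+1) f) := by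
      ext a
      rw [RingHom.comp_apply, AdjoinRoot.algebraMap_eq]
      exact AdjoinRoot.lift_of _
    set Ψ0 : MvPolynomial (Fin n) A' →+* SplitRing A (n+1) f :=
      MvPolynomial.eval₂Hom Ψ1 (fun i => mkI (MvPolynomial.X i.castSucc)) with hΨ0
    have hsplitΨ : g.map (Ψ0.comp MvPolynomial.C) =
        ∏ j : Fin n, (X - C (Ψ0 (MvPolynomial.X j))) := by
      rw [hΨ0, MvPolynomial.eval₂Hom_comp_C]
      simp only [MvPolynomial.eval₂Hom_X']
      have hfmap : f.map (mkI.comp MvPolynomial.C) = (X - C (Ψ1 x)) * g.map Ψ1 := by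
        have : (mkI.comp MvPolynomial.C) = Ψ1.comp (algebraMap A A') := hΨ1a.symm
        rw [this, ← Polynomial.map_map, ← hfA', ← hfg, Polynomial.map_mul,
          Polynomial.map_sub, Polynomial.map_X, Polynomial.map_C]
      rw [hBsplit, Fin.prod_univ_castSucc] at hfmap
      rw [hΨ1x] at hfmap
      refine (monic_X_sub_C (mkI (MvPolynomial.X (Fin.last n)))).isRegular.left ?_
      show (X - C (mkI (MvPolynomial.X (Fin.last n)))) * Polynomial.map Ψ1 g =
        (X - C (mkI (MvPolynomial.X (Fin.last n)))) *
          ∏ j : Fin n, (X - C (mkI (MvPolynomial.X j.castSucc)))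
      rw [← hfmap]
      ring
    have hkerΨ : I' ≤ RingHom.ker Ψ0 := by
      rw [hI', splittingIdeal, Ideal.span_le]
      rintro _ ⟨i, rfl⟩
      exact (key hgm hgd Ψ0).1 hsplitΨ i
    set Ψ : B' →+* SplitRing A (n+1) f := Ideal.Quotient.lift I' Ψ0 (fun a ha => RingHom.mem_ker.1 (hkerΨ ha))
      with hΨ
    -- the two are inverse
    have hΨΦ : Ψ.comp Φ = RingHom.id _ := by
      refine Ideal.Quotient.ringHom_ext (MvPolynomial.ringHom_ext (fun a => ?_) (fun j => ?_))
      · show Ψ (Φ (mkI (MvPolynomial.C a))) = mkI (MvPolynomial.C a)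
        rw [hΦ, Ideal.Quotient.lift_mk]
        show Ψ (Φ0 (MvPolynomial.C a)) = mkI (MvPolynomial.C a)
        rw [hΦ0, MvPolynomial.eval₂Hom_C]
        show Ψ (mkI' (MvPolynomial.C (algebraMap A A' a))) = mkI (MvPolynomial.C a)
        rw [hΨ, Ideal.Quotient.lift_mk, hΨ0, MvPolynomial.eval₂Hom_C]
        exact RingHom.congr_fun hΨ1a a
      · show Ψ (Φ (mkI (MvPolynomial.X j))) = mkI (MvPolynomial.X j)
        rw [hΦ, Ideal.Quotient.lift_mk]
        show Ψ (Φ0 (MvPolynomial.X j)) = mkI (MvPolynomial.X j)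
        rw [hΦ0, MvPolynomial.eval₂Hom_X']
        induction j using Fin.lastCases with
        | last =>
          show Ψ (r (Fin.last n)) = mkI (MvPolynomial.X (Fin.last n))
          rw [hrdef]
          simp only [Fin.snoc_last]
          show Ψ (mkI' (MvPolynomial.C x)) = mkI (MvPolynomial.X (Fin.last n))
          rw [hΨ, Ideal.Quotient.lift_mk, hΨ0, MvPolynomial.eval₂Hom_C]
          exact hΨ1x
        | cast i =>
          show Ψ (r i.castSucc) = mkI (MvPolynomial.X i.castSucc)
          rw [hrdef]
          simp only [Fin.snoc_castSucc]
          rw [hΨ, Ideal.Quotient.lift_mk, hΨ0, MvPolynomial.eval₂Hom_X']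
    have hΦΨ : Φ.comp Ψ = RingHom.id _ := by
      refine Ideal.Quotient.ringHom_ext (MvPolynomial.ringHom_ext (fun a' => ?_) (fun i => ?_))
      · show Φ (Ψ (mkI' (MvPolynomial.C a'))) = mkI' (MvPolynomial.C a')
        rw [hΨ, Ideal.Quotient.lift_mk, hΨ0, MvPolynomial.eval₂Hom_C]
        have : Φ.comp Ψ1 = mkI'.comp MvPolynomial.C := by
          refine Ideal.Quotient.ringHom_ext (Polynomial.ringHom_ext (fun a => ?_) ?_)
          · show Φ (Ψ1 (AdjoinRoot.of f a)) = mkI' (MvPolynomial.C (AdjoinRoot.of f a))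
            rw [← AdjoinRoot.algebraMap_eq]
            have h1 : Ψ1 (algebraMap A A' a) = mkI (MvPolynomial.C a) :=
              RingHom.congr_fun hΨ1a a
            rw [h1, hΦ, Ideal.Quotient.lift_mk, hΦ0, MvPolynomial.eval₂Hom_C]
            rfl
          · show Φ (Ψ1 (AdjoinRoot.root f)) = mkI' (MvPolynomial.C (AdjoinRoot.root f))
            rw [← hx, hΨ1x, hΦ, Ideal.Quotient.lift_mk, hΦ0, MvPolynomial.eval₂Hom_X']
            show r (Fin.last n) = mkI' (MvPolynomial.C x)
            rw [hrdef]
            simp only [Fin.snoc_last]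
            rfl
        exact RingHom.congr_fun this a'
      · show Φ (Ψ (mkI' (MvPolynomial.X i))) = mkI' (MvPolynomial.X i)
        rw [hΨ, Ideal.Quotient.lift_mk, hΨ0, MvPolynomial.eval₂Hom_X', hΦ,
          Ideal.Quotient.lift_mk, hΦ0, MvPolynomial.eval₂Hom_X']
        show r i.castSucc = mkI' (MvPolynomial.X i)
        rw [hrdef]
        simp only [Fin.snoc_castSucc]
    set e : SplitRing A (n+1) f ≃+* B' := RingEquiv.ofRingHom Φ Ψ
      (by rw [← hΦΨ]) (by rw [← hΨΦ]) with he
    have hcomm : ∀ a : A, e (algebraMap A (SplitRing A (n+1) f) a) = algebraMap A B' a := by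
      intro a
      show Φ (mkI (MvPolynomial.C a)) = algebraMap A B' a
      rw [hΦ, Ideal.Quotient.lift_mk, hΦ0, MvPolynomial.eval₂Hom_C]
    set eA : SplitRing A (n+1) f ≃ₐ[A] B' := AlgEquiv.ofRingEquiv hcomm with heA
    -- assemble bases
    obtain ⟨b'⟩ := IH A' g hgm hgd
    set pb := AdjoinRoot.powerBasis' hf with hpb
    have hdim : pb.dim = n + 1 := by rw [hpb, AdjoinRoot.powerBasis'_dim, hd]
    set bA' : Module.Basis (Fin (n+1)) A A' := pb.basis.reindex (finCongr hdim) with hbA'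
    set bB' : Module.Basis (Fin (n+1) × Fin n.factorial) A B' := bA'.smulTower b' with hbB'
    set eidx : (Fin (n+1) × Fin n.factorial) ≃ Fin (n+1).factorial :=
      finProdFinEquiv.trans (finCongr (Nat.factorial_succ n).symm) with heidx
    exact ⟨(bB'.reindex eidx).map eA.symm.toLinearEquiv⟩


/-- The splitting ring of a monic polynomial of degree `n` is a free `A`-module of
rank `n!`. -/
theorem stmt0 (A : Type) [CommRing A] (n : ℕ) (f : Polynomial A)
    (hmonic : f.Monic) (hdeg : f.natDegree = n) :
    Nonempty (Module.Basis (Fin (Nat.factorial n)) A (SplitRing A n f)) := by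
  exact aux n A f hmonic hdeg
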